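/- Under the same hypotheses, Θ : X → Out(A) is injective if and only if for every χ ≠ ι the spectral subspace Π_χ(A^c) of the relative commutant A^c = F ∩ A' contains no unitary. -/

import Mathlib

open ComplexConjugate


/-- `Θ : X → Out A` is injective iff for every `χ ≠ ι` the spectral
subspace `Π_χ(A^c)` of the relative commutant `A^c = F ∩ A'` contains no unitary. -/
theorem stmt1
    {F : Type*} [NormedRing F] [StarRing F] [CStarRing F] [NormedAlgebra ℂ F]
    [CompleteSpace F] [StarModule ℂ F]
    {G : Type*} [CommGroup G] [TopologicalSpace G] [IsTopologicalGroup G] [CompactSpace G]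
    (α : G → (F ≃⋆ₐ[ℂ] F))
    (hα1 : ∀ f : F, α 1 f = f)
    (hαmul : ∀ g h (f : F), α (g * h) f = α g (α h f))
    (hcont : ∀ f : F, Continuous fun g => α g f)
    (A : StarSubalgebra ℂ F)
    (hA : ∀ f : F, f ∈ A ↔ ∀ g : G, α g f = f)
    (U : PontryaginDual G → F)
    (hUu : ∀ χ, U χ ∈ unitary F)
    (hUspec : ∀ χ g, α g (U χ) = (χ g : ℂ) • U χ)
    (β : PontryaginDual G → (A ≃⋆ₐ[ℂ] A))
    (hβ : ∀ χ (a : A), (β χ a : F) = U χ * (a : F) * star (U χ)) :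
    -- Θ injective, i.e. Θ(χ₁) = Θ(χ₂) in Out A implies χ₁ = χ₂ ...
    (∀ χ₁ χ₂ : PontryaginDual G,
        (∃ u : A, u ∈ unitary A ∧ ∀ a : A, β χ₁ a = u * (β χ₂ a) * star u) → χ₁ = χ₂)
    ↔
    -- ... iff no spectral subspace Π_χ(A^c), χ ≠ ι, contains a unitary
    (∀ χ : PontryaginDual G, χ ≠ 1 →
        ¬ ∃ v : F, v ∈ unitary F ∧ (∀ a : F, a ∈ A → v * a = a * v) ∧
            ∀ g : G, α g v = (χ g : ℂ) • v) := by
  have circ : ∀ z : Circle, (z : ℂ) * star (z : ℂ) = 1 := by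
    intro z
    rw [show star (z:ℂ) = conj (z:ℂ) from rfl, Complex.mul_conj, Circle.normSq_coe,
      Complex.ofReal_one]
  have cancel : ∀ {y : F}, star y * y = 1 → ∀ x : F, star y * (y * x) = x := by
    intro y h x; rw [← mul_assoc, h, one_mul]
  constructor
  · rintro hinj χ hχ ⟨v, hvU, hvc, hvs⟩
    have hvc' : ∀ a : F, a ∈ A → star v * a = a * star v := by
      intro a ha
      have h := hvc (star a) (star_mem ha)
      calc star v * a = star (star a * v) := by rw [star_mul, star_star]
        _ = star (v * star a) := by rw [h]
        _ = a * star v := by rw [star_mul, star_star]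
    have hU1fix : ∀ g : G, α g (U 1) = U 1 := by
      intro g; rw [hUspec, show ((1 : PontryaginDual G) g : ℂ) = 1 from rfl, one_smul]
    have hwA : U χ * star v * star (U 1) ∈ A := by
      rw [hA]
      intro g
      have h1 : α g (star v) = star (χ g : ℂ) • star v := by
        rw [map_star, hvs, star_smul]
      have h2 : α g (star (U 1)) = star (U 1) := by
        rw [map_star, hU1fix]
      rw [map_mul, map_mul, hUspec, h1, h2, smul_mul_assoc, mul_smul_comm,
        smul_smul, circ, one_smul]
    have hwU : U χ * star v * star (U 1) ∈ unitary F :=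
      mul_mem (mul_mem (hUu χ) (Unitary.star_mem hvU)) (Unitary.star_mem (hUu 1))
    refine hχ (hinj χ 1 ⟨⟨_, hwA⟩, ?_, ?_⟩)
    · rw [Unitary.mem_iff] at hwU ⊢
      exact ⟨Subtype.ext (by push_cast; exact hwU.1), Subtype.ext (by push_cast; exact hwU.2)⟩
    · intro a
      have h11 : star (U 1) * U 1 = 1 := Unitary.star_mul_self_of_mem (hUu 1)
      have hvv : star v * v = 1 := Unitary.star_mul_self_of_mem hvU
      have hcomm : star v * (a : F) = (a : F) * star v := hvc' a a.2
      apply Subtype.ext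
      have hcoe : (((⟨U χ * star v * star (U 1), hwA⟩ : A) * β 1 a *
          star (⟨U χ * star v * star (U 1), hwA⟩ : A) : A) : F)
          = (U χ * star v * star (U 1)) * (β 1 a : F) *
            star ((U χ * star v * star (U 1))) := rfl
      rw [hcoe, hβ, hβ, star_mul, star_mul, star_star, star_star]
      simp only [mul_assoc]
      rw [cancel h11, cancel h11, ← mul_assoc (star v) ((a:F)), hcomm,
        mul_assoc ((a:F)), cancel hvv]
  · intro hns χ₁ χ₂ ⟨u, huA, huβ⟩
    by_contra hne
    have hχ : χ₁⁻¹ * χ₂ ≠ 1 := fun h => hne (inv_mul_eq_one.mp h)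
    have huF : (u : F) ∈ unitary F := by
      rw [Unitary.mem_iff] at huA ⊢
      constructor
      · have := congrArg (Subtype.val) huA.1; push_cast at this; exact this
      · have := congrArg (Subtype.val) huA.2; push_cast at this; exact this
    refine hns (χ₁⁻¹ * χ₂) hχ ⟨star (U χ₁) * (u : F) * U χ₂, ?_, ?_, ?_⟩
    · exact mul_mem (mul_mem (Unitary.star_mem (hUu χ₁)) huF) (hUu χ₂)
    · intro a ha
      have h1 : star (U χ₁) * U χ₁ = 1 := Unitary.star_mul_self_of_mem (hUu χ₁)
      have h2 : star (U χ₂) * U χ₂ = 1 := Unitary.star_mul_self_of_mem (hUu χ₂)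
      have hsu : star (u:F) * (u:F) = 1 := Unitary.star_mul_self_of_mem huF
      have hb2 : U χ₂ * a = (β χ₂ ⟨a, ha⟩ : F) * U χ₂ := by
        rw [hβ, mul_assoc, h2, mul_one]
      have hb1 : (u:F) * (β χ₂ ⟨a, ha⟩ : F) = (β χ₁ ⟨a, ha⟩ : F) * (u:F) := by
        have h := congrArg (Subtype.val) (huβ ⟨a, ha⟩)
        have hst : ((star u : A) : F) = star (u : F) := rfl
        have hmm : ((u * β χ₂ ⟨a, ha⟩ * star u : A) : F)
            = (u:F) * (β χ₂ ⟨a, ha⟩ : F) * star (u:F) := rfl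
        rw [hmm] at h
        rw [h, mul_assoc _ (star (u:F)) ((u:F)), hsu, mul_one]
      have hb3 : star (U χ₁) * (β χ₁ ⟨a, ha⟩ : F) = a * star (U χ₁) := by
        rw [hβ, ← mul_assoc, ← mul_assoc, h1, one_mul]
      simp only [mul_assoc]
      rw [hb2, ← mul_assoc ((u:F)), hb1, mul_assoc, ← mul_assoc (star (U χ₁)), hb3,
        mul_assoc]
    · intro g
      have hufix : α g (u : F) = (u : F) := (hA _).mp u.2 g
      have h1 : α g (star (U χ₁)) = star (χ₁ g : ℂ) • star (U χ₁) := by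
        rw [map_star, hUspec, star_smul]
      have hval : ((χ₁⁻¹ * χ₂) g : ℂ) = star (χ₁ g : ℂ) * (χ₂ g : ℂ) := by
        rw [show ((χ₁⁻¹ * χ₂) g : ℂ) = (((χ₁ g)⁻¹ : Circle) : ℂ) * ((χ₂ g : Circle) : ℂ) from rfl,
          Circle.coe_inv_eq_conj]
        rfl
      rw [map_mul, map_mul, h1, hufix, hUspec, hval,
        smul_mul_assoc, smul_mul_assoc, mul_smul_comm, smul_smul]
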